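/- arXiv:1206.5410 — 4 statements merged into one kernel-verified Lean document; each statement's English description precedes it below -/
import Mathlib

section
/- Let $\{I_k\}_{k=0}^{\infty}$ and $\{A_k\}_{k=0}^{\infty}$ be sequences of nonnegative real numbers such that for every integer $M \geq 0$ we have $I_M^2 \cdot \sum_{k > M+1} I_k \leq A_M$ (assuming the sums converge). Then for every integer $M_0 \geq 0$, $\sum_{M_0 \leq j \leq \ell < k-1} I_k I_\ell I_j \leq \sum_{M_0 \leq j \leq \ell} \sqrt{A_j A_\ell}$. -/
theorem stmt0 (I A : ℕ → ℝ) (hI : ∀ n, 0 ≤ I n) (hA : ∀ n, 0 ≤ A n)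
    (hIsum : Summable I)
    (h : ∀ M : ℕ, I M ^ 2 * (∑' k : ℕ, I (M + 2 + k)) ≤ A M)
    (M0 : ℕ)
    (hsum3 : Summable (fun p : ℕ × ℕ × ℕ =>
      if M0 ≤ p.1 ∧ p.1 ≤ p.2.1 ∧ p.2.1 + 1 < p.2.2 then I p.2.2 * I p.2.1 * I p.1 else 0))
    (hsum2 : Summable (fun p : ℕ × ℕ =>
      if M0 ≤ p.1 ∧ p.1 ≤ p.2 then Real.sqrt (A p.1 * A p.2) else 0)) :
    (∑' p : ℕ × ℕ × ℕ,
        if M0 ≤ p.1 ∧ p.1 ≤ p.2.1 ∧ p.2.1 + 1 < p.2.2 then I p.2.2 * I p.2.1 * I p.1 else 0)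
      ≤ ∑' p : ℕ × ℕ, if M0 ≤ p.1 ∧ p.1 ≤ p.2 then Real.sqrt (A p.1 * A p.2) else 0 := by
  set T : ℕ → ℝ := fun n => ∑' k : ℕ, I (n + 2 + k) with hT
  have hTnn : ∀ n, 0 ≤ T n := fun n => tsum_nonneg fun k => hI _
  have hTeq : ∀ n, T n = (∑' k, I k) - ∑ i ∈ Finset.range (n + 2), I i := by
    intro n
    have := Summable.sum_add_tsum_nat_add (f := I) (n + 2) hIsum
    have e : (∑' k : ℕ, I (k + (n + 2))) = T n := by
      simp only [hT]
      congr 1; funext k; congr 1; omega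
    linarith [this, e.symm ▸ this]
  have hTmono : ∀ j ℓ : ℕ, j ≤ ℓ → T ℓ ≤ T j := by
    intro j ℓ hjl
    rw [hTeq, hTeq]
    have : ∑ i ∈ Finset.range (j + 2), I i ≤ ∑ i ∈ Finset.range (ℓ + 2), I i := by
      apply Finset.sum_le_sum_of_subset_of_nonneg
      · exact Finset.range_subset_range.2 (by omega)
      · intro i _ _; exact hI i
    linarith
  -- key scalar inequality
  have key : ∀ j ℓ : ℕ, j ≤ ℓ → I j * I ℓ * T ℓ ≤ Real.sqrt (A j * A ℓ) := by
    intro j ℓ hjl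
    rw [Real.le_sqrt (mul_nonneg (mul_nonneg (hI j) (hI ℓ)) (hTnn ℓ)) (mul_nonneg (hA j) (hA ℓ))]
    have h1 := h j
    have h2 := h ℓ
    have hTm := hTmono j ℓ hjl
    have hTlnn := hTnn ℓ
    have hTjnn := hTnn j
    have hprod : (I j ^ 2 * T j) * (I ℓ ^ 2 * T ℓ) ≤ A j * A ℓ :=
      mul_le_mul h1 h2 (by positivity) (hA j)
    nlinarith [sq_nonneg (I j), sq_nonneg (I ℓ), mul_nonneg (sq_nonneg (I j)) hTlnn,
      mul_le_mul_of_nonneg_left hTm (mul_nonneg (sq_nonneg (I j)) hTlnn),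
      mul_nonneg (mul_nonneg (sq_nonneg (I ℓ)) hTlnn) (mul_nonneg (sq_nonneg (I j)) hTlnn)]
  set f3 : ℕ × ℕ × ℕ → ℝ := fun p =>
    if M0 ≤ p.1 ∧ p.1 ≤ p.2.1 ∧ p.2.1 + 1 < p.2.2 then I p.2.2 * I p.2.1 * I p.1 else 0
    with hf3
  set f2 : ℕ × ℕ → ℝ := fun p =>
    if M0 ≤ p.1 ∧ p.1 ≤ p.2 then Real.sqrt (A p.1 * A p.2) else 0 with hf2
  have hf3nn : ∀ p, 0 ≤ f3 p := by
    intro p; simp only [hf3]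
    split
    · exact mul_nonneg (mul_nonneg (hI _) (hI _)) (hI _)
    · exact le_rfl
  have hf2nn : ∀ p, 0 ≤ f2 p := by
    intro p; simp only [hf2]
    split
    · exact Real.sqrt_nonneg _
    · exact le_rfl
  -- inner sum over k
  have inner_eq : ∀ j ℓ : ℕ, M0 ≤ j → j ≤ ℓ →
      (∑' k : ℕ, f3 (j, ℓ, k)) = T ℓ * (I ℓ * I j) := by
    intro j ℓ hj hjl
    have hinj : Function.Injective (fun k : ℕ => ℓ + 2 + k) := fun a b hab => by simpa using hab
    have hsupp : Function.support (fun k : ℕ => f3 (j, ℓ, k)) ⊆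
        Set.range (fun k : ℕ => ℓ + 2 + k) := by
      intro k hk
      simp only [hf3, Function.mem_support, ne_eq, ite_eq_right_iff, not_forall] at hk
      obtain ⟨⟨_, _, hk'⟩, _⟩ := hk
      exact ⟨k - (ℓ + 2), show ℓ + 2 + (k - (ℓ + 2)) = k by omega⟩
    rw [← hinj.tsum_eq hsupp]
    have : ∀ k : ℕ, f3 (j, ℓ, ℓ + 2 + k) = I (ℓ + 2 + k) * (I ℓ * I j) := by
      intro k
      simp only [hf3]
      rw [if_pos ⟨hj, hjl, by omega⟩, mul_assoc]
    simp_rw [this]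
    rw [tsum_mul_right]
  -- summability pieces
  obtain ⟨h3a, h3b⟩ := (summable_prod_of_nonneg hf3nn).mp hsum3
  obtain ⟨h2a, _⟩ := (summable_prod_of_nonneg hf2nn).mp hsum2
  have h3inner : ∀ j, (∀ ℓ, Summable fun k => f3 (j, ℓ, k)) ∧
      Summable fun ℓ => ∑' k, f3 (j, ℓ, k) :=
    fun j => (summable_prod_of_nonneg (fun q => hf3nn (j, q))).mp (h3a j)
  -- pointwise bound for fixed j, ℓ
  have step : ∀ j ℓ : ℕ, (∑' k : ℕ, f3 (j, ℓ, k)) ≤ f2 (j, ℓ) := by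
    intro j ℓ
    by_cases hc : M0 ≤ j ∧ j ≤ ℓ
    · rw [inner_eq j ℓ hc.1 hc.2]
      have := key j ℓ hc.2
      simp only [hf2, if_pos hc]
      calc T ℓ * (I ℓ * I j) = I j * I ℓ * T ℓ := by ring
        _ ≤ _ := this
    · have : ∀ k : ℕ, f3 (j, ℓ, k) = 0 := by
        intro k; simp only [hf3]
        rw [if_neg (by tauto)]
      simp only [this, tsum_zero, hf2]
      rw [if_neg hc]
  -- assemble
  rw [Summable.tsum_prod' hsum3 h3a, Summable.tsum_prod' hsum2 h2a]
  apply Summable.tsum_le_tsum _ _ _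
  · intro j
    rw [Summable.tsum_prod' (h3a j) (h3inner j).1]
    exact Summable.tsum_le_tsum (fun ℓ => step j ℓ) (h3inner j).2 (h2a j)
  · have : (fun j => ∑' q : ℕ × ℕ, f3 (j, q)) = fun j => ∑' ℓ, ∑' k, f3 (j, ℓ, k) := by
      funext j; exact Summable.tsum_prod' (h3a j) (h3inner j).1
    exact this ▸ h3b
  · exact ((summable_prod_of_nonneg hf2nn).mp hsum2).2
end

section
/- With the notation of the dyadic-type intervals $\mathcal{I}_k(b) = (b^{-k-1}, b^{-k}]$ for $b>1$: for any $0 < R \leq 1$, any permutation-symmetric union $\bigcup_{\sigma \in S_3} \bigcup_{N(R,b) \leq j \leq \ell < k-1} \mathcal{I}_{\sigma(j)}(b) \times \mathcal{I}_{\sigma(\ell)}(b) \times \mathcal{I}_{\sigma(k)}(b)$ is contained in $\mathcal{S}_{\min(bR,1),\,1-1/b}$, where $\mathcal{S}_{R',\rho'} = \{(\epsilon_1,\epsilon_2,\epsilon_3) \in [0,R']^3 : \epsilon_0 - \epsilon_- > \rho'\,\epsilon_0\}$ with $\epsilon_- \leq \epsilon_0 \leq \epsilon_+$ the ordered coordinates.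 -/
/-- The interval `𝓘_k(b) = (b^{-k-1}, b^{-k}]`. -/
def Ik (b : ℝ) (k : ℕ) : Set ℝ := Set.Ioc (b ^ (-(k : ℤ) - 1)) (b ^ (-(k : ℤ)))

/-- Minimum of the three coordinates. -/
def eMin (ε : Fin 3 → ℝ) : ℝ := min (ε 0) (min (ε 1) (ε 2))

/-- Maximum of the three coordinates. -/
def eMax (ε : Fin 3 → ℝ) : ℝ := max (ε 0) (max (ε 1) (ε 2))

/-- Middle value of the three coordinates. -/
def eMid (ε : Fin 3 → ℝ) : ℝ := ε 0 + ε 1 + ε 2 - eMin ε - eMax ε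

theorem stmt3 (b R : ℝ) (hb : 1 < b) (hR0 : 0 < R) (hR1 : R ≤ 1)
    (j ℓ k : ℕ) (hj : Nat.floor (Real.log (1 / R) / Real.log b) ≤ j)
    (hjl : j ≤ ℓ) (hlk : ℓ + 1 < k)
    (σ : Equiv.Perm (Fin 3)) (ε : Fin 3 → ℝ)
    (h0 : ε (σ 0) ∈ Ik b j) (h1 : ε (σ 1) ∈ Ik b ℓ) (h2 : ε (σ 2) ∈ Ik b k) :
    (∀ i, ε i ∈ Set.Icc (0 : ℝ) (min (b * R) 1)) ∧
    (1 - 1 / b) * eMid ε < eMid ε - eMin ε := by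
  have hb0 : (0:ℝ) < b := lt_trans one_pos hb
  have hbne : b ≠ 0 := ne_of_gt hb0
  obtain ⟨ha1, ha2⟩ := h0
  obtain ⟨hb1, hb2⟩ := h1
  obtain ⟨hc1, hc2⟩ := h2
  set a := ε (σ 0) with hadef
  set a' := ε (σ 1) with ha'def
  set c := ε (σ 2) with hcdef
  have hpow : ∀ m n : ℤ, m ≤ n → b ^ m ≤ b ^ n := fun m n h => zpow_le_zpow_right₀ hb.le h
  have hc0 : 0 < c := lt_trans (zpow_pos hb0 _) hc1
  have ha0 : 0 < a := lt_trans (zpow_pos hb0 _) ha1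
  have ha'0 : 0 < a' := lt_trans (zpow_pos hb0 _) hb1
  -- key: b * c < a and b * c < a'
  have hbc : b * c ≤ b ^ (1 - (k:ℤ)) := by
    calc b * c ≤ b * b ^ (-(k:ℤ)) := by nlinarith
    _ = b ^ (1 - (k:ℤ)) := by
        rw [show (1:ℤ) - k = 1 + (-(k:ℤ)) by ring, zpow_add₀ hbne, zpow_one]
  have hbca : b * c < a := by
    refine lt_of_le_of_lt (le_trans hbc (hpow _ _ ?_)) ha1
    omega
  have hbca' : b * c < a' := by
    refine lt_of_le_of_lt (le_trans hbc (hpow _ _ ?_)) hb1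
    omega
  -- upper bound B = b^{-j}
  set B := b ^ (-(j:ℤ)) with hBdef
  have haB : a ≤ B := ha2
  have ha'B : a' ≤ B := le_trans hb2 (hpow _ _ (by omega))
  have hcB : c ≤ B := le_trans hc2 (hpow _ _ (by omega))
  have hB1 : B ≤ 1 := by
    have h := hpow (-(j:ℤ)) 0 (by omega)
    rwa [zpow_zero] at h
  -- B ≤ b * R
  set x := Real.log (1 / R) / Real.log b with hxdef
  set N := Nat.floor x with hNdef
  have hBR : B ≤ b * R := by
    have hxN : x < (N : ℝ) + 1 := Nat.lt_floor_add_one x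
    have hlogb : 0 < Real.log b := Real.log_pos hb
    have hbx : (b : ℝ) ^ (-x) = R := by
      rw [Real.rpow_def_of_pos hb0]
      have : Real.log b * (-x) = Real.log R := by
        rw [hxdef]
        field_simp
        rw [one_div, Real.log_inv]
        ring
      rw [this, Real.exp_log hR0]
    have h1' : (b : ℝ) ^ (-((N:ℝ) + 1)) ≤ b ^ (-x) :=
      Real.rpow_le_rpow_of_exponent_le hb.le (by linarith)
    have h2' : b ^ (-((N:ℤ) + 1)) ≤ R := by
      have : (b : ℝ) ^ (-((N:ℤ) + 1)) = (b : ℝ) ^ (-((N:ℝ) + 1)) := by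
        rw [← Real.rpow_intCast]
        push_cast
        ring_nf
      rw [this, ← hbx]
      exact h1'
    have h3' : B ≤ b ^ (-(N:ℤ)) := hpow _ _ (by omega)
    have h4' : b ^ (-(N:ℤ)) = b * b ^ (-((N:ℤ) + 1)) := by
      rw [show -(N:ℤ) = 1 + (-((N:ℤ)+1)) by ring, zpow_add₀ hbne, zpow_one]
    calc B ≤ b ^ (-(N:ℤ)) := h3'
      _ = b * b ^ (-((N:ℤ) + 1)) := h4'
      _ ≤ b * R := by nlinarith
  -- coverage
  have h3 : ∀ t : Fin 3, t = 0 ∨ t = 1 ∨ t = 2 := by decide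
  have hcover : ∀ i : Fin 3, ε i = a ∨ ε i = a' ∨ ε i = c := by
    intro i
    rcases h3 (σ.symm i) with h | h | h
    · left; rw [hadef, ← h, Equiv.apply_symm_apply]
    · right; left; rw [ha'def, ← h, Equiv.apply_symm_apply]
    · right; right; rw [hcdef, ← h, Equiv.apply_symm_apply]
  have hbc1 : c < b * c := by nlinarith [mul_pos (sub_pos.mpr hb) hc0]
  have hca : c < a := lt_trans hbc1 hbca
  have hca' : c < a' := lt_trans hbc1 hbca'
  constructor
  · intro i
    rcases hcover i with h | h | h <;> rw [h] <;>
      exact ⟨by positivity, le_min (le_trans (by assumption) hBR) (le_trans (by assumption) hB1)⟩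
  · -- eMin = c, eMax = max a a', eMid = min a a'
    have hminle : ∀ i, c ≤ ε i := by
      intro i
      rcases hcover i with h | h | h <;> rw [h] <;> linarith
    have hmaxge : ∀ i, ε i ≤ max a a' := by
      intro i
      rcases hcover i with h | h | h <;> rw [h]
      · exact le_max_left _ _
      · exact le_max_right _ _
      · exact le_trans hca.le (le_max_left _ _)
    have heMin : eMin ε = c := by
      unfold eMin
      apply le_antisymm
      · rcases h3 (σ 2) with h | h | h <;> rw [hcdef, h]
        · exact min_le_left _ _
        · exact le_trans (min_le_right _ _) (min_le_left _ _)
        · exact le_trans (min_le_right _ _) (min_le_right _ _)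
      · exact le_min (hminle 0) (le_min (hminle 1) (hminle 2))
    have heMaxub : ∀ i, ε i ≤ eMax ε := by
      intro i
      rcases h3 i with h | h | h <;> rw [h] <;> unfold eMax
      · exact le_max_left _ _
      · exact le_trans (le_max_left _ _) (le_max_right _ _)
      · exact le_trans (le_max_right _ _) (le_max_right _ _)
    have heMax : eMax ε = max a a' := by
      apply le_antisymm
      · unfold eMax
        exact max_le (hmaxge 0) (max_le (hmaxge 1) (hmaxge 2))
      · exact max_le (heMaxub (σ 0)) (heMaxub (σ 1))
    have hsum : ε 0 + ε 1 + ε 2 = a + a' + c := by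
      have h := Equiv.sum_comp σ ε
      rw [Fin.sum_univ_three, Fin.sum_univ_three] at h
      exact h.symm
    have heMid : eMid ε = min a a' := by
      unfold eMid
      rw [heMin, heMax, hsum]
      have := min_add_max a a'
      linarith
    rw [heMid, heMin]
    set m := min a a' with hmdef
    have hm : b * c < m := lt_min hbca hbca'
    have hkey : (1 - 1/b) * m = m - m / b := by
      field_simp
    rw [hkey]
    have hcm : c < m / b := by
      rw [lt_div_iff₀ hb0]
      linarith [mul_comm c b]
    linarith
end

section
/- Let $g$ be a finite nonnegative Borel measure on $[0,1]$ with $g(\{0\}) = 0$. Fix $b > 1$ and $0 < \delta < 2/3$, and set $\eta = \min\{1/3 - \delta/2,\ \delta/6\}$. Define intervals $\mathcal{I}_k = (b^{-k-1}, b^{-k}]$ for $k \geq 0$ and extended intervals $\mathcal{I}_k^{(E)} = \mathcal{I}_{k-1} \cup \mathcal{I}_k \cup \mathcal{I}_{k+1}$ (with $\mathcal{I}_{-1} = \emptyset$). Then at least one of the following holds: (i) there exists $k$ with $g(\mathcal{I}_k^{(E)}) \geq (1-\delta)\, g([0,1])$; or (ii) there exist sets $\mathcal{U}_1, \mathcal{U}_2$,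 each a union of intervals from the family $\{\mathcal{I}_k\}$, such that $\mathcal{U}_2 \cap \mathcal{U}_1^{(E)} = \emptyset$ and $\min\{g(\mathcal{U}_1), g(\mathcal{U}_2)\} \geq \eta\, g([0,1])$, where $\mathcal{U}_1^{(E)}$ denotes the union of the extended intervals corresponding to the intervals forming $\mathcal{U}_1$. -/
open MeasureTheory

/-- The extended interval `𝓘_k^{(E)}(b) = 𝓘_{k-1} ∪ 𝓘_k ∪ 𝓘_{k+1}` (with `𝓘_{-1} = ∅`). -/
def IkE (b : ℝ) (k : ℕ) : Set ℝ :=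
  ⋃ m ∈ {m : ℕ | m = k ∨ m = k + 1 ∨ m + 1 = k}, Ik b m

theorem stmt4 (b δ : ℝ) (hb : 1 < b) (hδ0 : 0 < δ) (hδ1 : δ < 2 / 3)
    (μ : Measure ℝ) [IsFiniteMeasure μ]
    (hsupp : μ ((Set.Icc (0 : ℝ) 1)ᶜ) = 0) (h0 : μ {0} = 0) :
    (∃ k : ℕ, ENNReal.ofReal (1 - δ) * μ (Set.Icc 0 1) ≤ μ (IkE b k)) ∨
    (∃ S1 S2 : Set ℕ,
      (⋃ k ∈ S2, Ik b k) ∩ (⋃ k ∈ S1, IkE b k) = ∅ ∧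
      ENNReal.ofReal (min (1 / 3 - δ / 2) (δ / 6)) * μ (Set.Icc 0 1) ≤ μ (⋃ k ∈ S1, Ik b k) ∧
      ENNReal.ofReal (min (1 / 3 - δ / 2) (δ / 6)) * μ (Set.Icc 0 1) ≤ μ (⋃ k ∈ S2, Ik b k)) := by
  classical
  have hb0 : (0:ℝ) < b := lt_trans one_pos hb
  have hmeas : ∀ k, MeasurableSet (Ik b k) := fun k => measurableSet_Ioc
  -- disjointness of the intervals
  have hdisj : Pairwise (Function.onFun Disjoint (Ik b)) := by
    have key : ∀ i j : ℕ, i < j → Disjoint (Ik b i) (Ik b j) := by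
      intro i j hij
      rw [Set.disjoint_left]
      intro x hxi hxj
      simp only [Ik, Set.mem_Ioc] at hxi hxj
      have h1 : (b:ℝ) ^ (-(j:ℤ)) ≤ b ^ (-(i:ℤ) - 1) :=
        zpow_le_zpow_right₀ hb.le (by omega)
      linarith [hxi.1, hxi.2, hxj.1, hxj.2]
    intro i j hij
    rcases lt_or_gt_of_ne hij with h | h
    · exact key i j h
    · exact (key j i h).symm
  have hdisj' : ∀ i j : ℕ, i ≠ j → ∀ x, x ∈ Ik b i → x ∈ Ik b j → False := by
    intro i j hij x hxi hxj
    exact Set.disjoint_left.1 (hdisj hij) hxi hxj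
  -- the union of the intervals is (0,1]
  have hpos : ∀ k : ℕ, (0:ℝ) < b ^ (-(k:ℤ) - 1) := fun k => zpow_pos hb0 _
  have hcover : (⋃ k, Ik b k) = Set.Ioc (0:ℝ) 1 := by
    ext x
    simp only [Set.mem_iUnion, Ik, Set.mem_Ioc]
    constructor
    · rintro ⟨k, h1, h2⟩
      refine ⟨lt_trans (hpos k) h1, h2.trans ?_⟩
      calc b ^ (-(k:ℤ)) ≤ b ^ (0:ℤ) := zpow_le_zpow_right₀ hb.le (by omega)
        _ = 1 := zpow_zero b
    · rintro ⟨hx0, hx1⟩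
      have hex : ∃ n : ℕ, b ^ (-(n:ℤ) - 1) < x := by
        obtain ⟨n, hn⟩ := pow_unbounded_of_one_lt x⁻¹ hb
        refine ⟨n, ?_⟩
        have h1 : (b:ℝ) ^ (-(n:ℤ)) < x := by
          rw [zpow_neg, zpow_natCast]
          exact inv_lt_of_inv_lt₀ hx0 hn
        have h2 : b ^ (-(n:ℤ) - 1) < b ^ (-(n:ℤ)) := zpow_lt_zpow_right₀ hb (by omega)
        linarith
      obtain ⟨k, hk, hkmin⟩ : ∃ k : ℕ, (b ^ (-(k:ℤ) - 1) < x) ∧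
          ∀ m < k, ¬ (b ^ (-(m:ℤ) - 1) < x) :=
        ⟨Nat.find hex, Nat.find_spec hex, fun m hm => Nat.find_min hex hm⟩
      refine ⟨k, hk, ?_⟩
      match k, hk, hkmin with
      | 0, hk, _ =>
        simpa using hx1
      | (m+1 : ℕ), hk, hkmin =>
        have := hkmin m (Nat.lt_succ_self m)
        push_neg at this
        have he : (-(m:ℤ) - 1) = (-((m+1 : ℕ):ℤ)) := by push_cast; ring
        rwa [he] at this
  -- measure of [0,1] equals measure of (0,1]
  have hMIoc : μ (Set.Ioc (0:ℝ) 1) = μ (Set.Icc (0:ℝ) 1) := by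
    apply le_antisymm (measure_mono Set.Ioc_subset_Icc_self)
    calc μ (Set.Icc (0:ℝ) 1) = μ (insert (0:ℝ) (Set.Ioc 0 1)) := by
          rw [Set.Ioc_insert_left (by norm_num : (0:ℝ) ≤ 1)]
      _ ≤ μ {0} + μ (Set.Ioc 0 1) := by
          rw [Set.insert_eq]; exact measure_union_le _ _
      _ = μ (Set.Ioc 0 1) := by rw [h0, zero_add]
  set M := μ (Set.Icc (0:ℝ) 1) with hMdef
  rcases eq_or_ne M 0 with hM0 | hM0
  · left; exact ⟨0, by rw [hM0, mul_zero]; exact zero_le⟩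
  set Mr := M.toReal with hMrdef
  have hMfin : M ≠ ⊤ := measure_ne_top μ _
  have hMr : 0 < Mr := ENNReal.toReal_pos hM0 hMfin
  set η := min (1 / 3 - δ / 2) (δ / 6) with hηdef
  have hη0 : 0 < η := lt_min (by linarith) (by linarith)
  have hη1 : η < 1 := lt_of_le_of_lt (min_le_right _ _) (by linarith)
  have h2η : 2 * η ≤ δ := by
    have := min_le_right (1 / 3 - δ / 2) (δ / 6); rw [← hηdef] at this; linarith
  -- the sum of interval measures
  set f : ℕ → ℝ := fun k => (μ (Ik b k)).toReal with hfdef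
  have hf0 : ∀ k, 0 ≤ f k := fun k => ENNReal.toReal_nonneg
  have htsum : (∑' k, μ (Ik b k)) = M := by
    rw [← measure_iUnion hdisj hmeas, hcover, hMIoc]
  have hsumf : HasSum f Mr := by
    have hs : Summable f := ENNReal.summable_toReal (by rw [htsum]; exact hMfin)
    have : ∑' k, f k = Mr := by
      rw [hfdef, ← ENNReal.tsum_toReal_eq (fun k => measure_ne_top μ _), htsum]
    rw [← this]; exact hs.hasSum
  set s : ℕ → ℝ := fun n => ∑ k ∈ Finset.range n, f k with hsdef
  have hsmono : Monotone s := by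
    intro m n hmn
    exact Finset.sum_le_sum_of_subset_of_nonneg (Finset.range_subset_range.2 hmn)
      (fun i _ _ => hf0 i)
  have hstend : Filter.Tendsto s Filter.atTop (nhds Mr) := hsumf.tendsto_sum_nat
  -- measure of finite unions
  have hA : ∀ n : ℕ, μ (⋃ k ∈ Finset.range n, Ik b k) = ∑ k ∈ Finset.range n, μ (Ik b k) := by
    intro n
    exact measure_biUnion_finset (fun i _ j _ hij => hdisj hij) (fun i _ => hmeas i)
  have hAr : ∀ n : ℕ, (μ (⋃ k ∈ Finset.range n, Ik b k)).toReal = s n := by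
    intro n
    rw [hA n, ENNReal.toReal_sum (fun i _ => measure_ne_top μ _)]
  -- find minimal N with s (N+1) ≥ η * Mr
  have hex : ∃ n : ℕ, η * Mr ≤ s (n + 1) := by
    have hlt : η * Mr < Mr := by nlinarith
    obtain ⟨n, hn⟩ := (hstend.eventually (eventually_ge_nhds hlt)).exists
    exact ⟨n, hn.trans (hsmono (Nat.le_succ n))⟩
  obtain ⟨N, hN, hNmin⟩ : ∃ N : ℕ, η * Mr ≤ s (N + 1) ∧ ∀ m < N, ¬ (η * Mr ≤ s (m + 1)) :=
    ⟨Nat.find hex, Nat.find_spec hex, fun m hm => Nat.find_min hex hm⟩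
  have hsN : s N < η * Mr := by
    match N, hN, hNmin with
    | 0, _, _ => simpa [hsdef] using mul_pos hη0 hMr
    | (m+1 : ℕ), _, hNmin =>
      have := hNmin m (Nat.lt_succ_self m)
      linarith [not_le.1 this]
  -- conversion helper
  have hconv : ∀ (c : ℝ) (T : Set ℝ), 0 ≤ c → c * Mr ≤ (μ T).toReal →
      ENNReal.ofReal c * M ≤ μ T := by
    intro c T hc hle
    calc ENNReal.ofReal c * M = ENNReal.ofReal c * ENNReal.ofReal Mr := by
          rw [hMrdef, ENNReal.ofReal_toReal hMfin]
      _ = ENNReal.ofReal (c * Mr) := (ENNReal.ofReal_mul hc).symm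
      _ ≤ ENNReal.ofReal (μ T).toReal := ENNReal.ofReal_le_ofReal hle
      _ = μ T := ENNReal.ofReal_toReal (measure_ne_top μ _)
  rcases le_or_gt (η * Mr) (Mr - s (N + 2)) with hT | hT
  · -- tail is big: two separated chunks
    right
    refine ⟨{k | k ≤ N}, {k | N + 2 ≤ k}, ?_, ?_, ?_⟩
    · -- disjointness
      rw [Set.eq_empty_iff_forall_notMem]
      rintro x ⟨hx2, hx1⟩
      simp only [Set.mem_iUnion, Set.mem_setOf_eq] at hx2 hx1
      obtain ⟨j, hj, hxj⟩ := hx2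
      obtain ⟨i, hi, hxi⟩ := hx1
      simp only [IkE, Set.mem_iUnion, Set.mem_setOf_eq] at hxi
      obtain ⟨m, hm, hxm⟩ := hxi
      have hmj : m ≠ j := by omega
      exact hdisj' m j hmj x hxm hxj
    · -- first chunk
      have hEq : (⋃ k ∈ {k : ℕ | k ≤ N}, Ik b k) = ⋃ k ∈ Finset.range (N+1), Ik b k := by
        ext x
        simp only [Set.mem_iUnion, Set.mem_setOf_eq, Finset.mem_range, Nat.lt_succ_iff]
      rw [hEq]
      apply hconv η _ hη0.le
      rw [hAr (N+1)]
      exact hN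
    · -- second chunk: measure = Mr - s (N+2)
      set U2 : Set ℝ := ⋃ k ∈ {k : ℕ | N + 2 ≤ k}, Ik b k with hU2
      have hU2m : MeasurableSet U2 := by
        apply MeasurableSet.biUnion (Set.to_countable _) (fun k _ => hmeas k)
      have hsplit : Set.Ioc (0:ℝ) 1 = (⋃ k ∈ Finset.range (N+2), Ik b k) ∪ U2 := by
        rw [← hcover]
        ext x
        simp only [Set.mem_iUnion, Set.mem_union, Finset.mem_range, Set.mem_setOf_eq, hU2]
        constructor
        · rintro ⟨k, hk⟩
          rcases lt_or_ge k (N+2) with h | h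
          · exact Or.inl ⟨k, h, hk⟩
          · exact Or.inr ⟨k, h, hk⟩
        · rintro (⟨k, _, hk⟩ | ⟨k, _, hk⟩) <;> exact ⟨k, hk⟩
      have hdAB : Disjoint (⋃ k ∈ Finset.range (N+2), Ik b k) U2 := by
        rw [Set.disjoint_left]
        intro x hxA hxB
        simp only [Set.mem_iUnion, Finset.mem_range, Set.mem_setOf_eq, hU2] at hxA hxB
        obtain ⟨i, hi, hxi⟩ := hxA
        obtain ⟨j, hj, hxj⟩ := hxB
        exact hdisj' i j (by omega) x hxi hxj
      have hMsum : M = μ (⋃ k ∈ Finset.range (N+2), Ik b k) + μ U2 := by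
        rw [← hMIoc, hsplit, measure_union hdAB hU2m]
      have hU2r : Mr = s (N+2) + (μ U2).toReal := by
        rw [hMrdef, hMsum, ENNReal.toReal_add (measure_ne_top μ _) (measure_ne_top μ _),
          hAr (N+2)]
      apply hconv η _ hη0.le
      linarith
  · -- no big tail: a single extended interval has most of the mass
    left
    refine ⟨N, ?_⟩
    have hsub : Ik b N ∪ Ik b (N+1) ⊆ IkE b N := by
      intro x hx
      simp only [IkE, Set.mem_iUnion, Set.mem_setOf_eq]
      rcases hx with h | h
      · exact ⟨N, Or.inl rfl, h⟩
      · exact ⟨N+1, Or.inr (Or.inl rfl), h⟩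
    have hmu : μ (Ik b N ∪ Ik b (N+1)) = μ (Ik b N) + μ (Ik b (N+1)) :=
      measure_union (hdisj (by omega)) (hmeas _)
    have hs2 : s (N+2) = s N + f N + f (N+1) := by
      rw [hsdef]
      simp only
      rw [Finset.sum_range_succ, Finset.sum_range_succ]
    have hge : (1 - δ) * Mr ≤ (μ (Ik b N ∪ Ik b (N+1))).toReal := by
      rw [hmu, ENNReal.toReal_add (measure_ne_top μ _) (measure_ne_top μ _)]
      have : f N + f (N+1) = s (N+2) - s N := by linarith [hs2]
      nlinarith
    refine le_trans (hconv (1 - δ) _ (by linarith) hge) (measure_mono hsub)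
end

section
/- For $0 < \theta < 1$ define $\sigma(X_-, X_0, X_+) = (X_+ + X_- - X_0)^\theta + (X_+ + X_0 - X_-)^\theta - 2 X_+^\theta$ for $0 \leq X_- \leq X_0 \leq X_+$ with $X_+ > 0$. Then there exists a constant $A_\theta > 0$ such that $\sigma(X_-, X_0, X_+) \leq -A_\theta\, X_+^\theta \left(\frac{X_0 - X_-}{X_+}\right)^2$ for all such triples. -/
open Real Set

/-- Key scalar inequality: for `t ∈ [0,1]`,
`(1-t)^θ + (1+t)^θ - 2 ≤ -(θ(1-θ)/2) t²`. -/
lemma stmt10_key (θ : ℝ) (hθ0 : 0 < θ) (hθ1 : θ < 1) {t : ℝ} (ht0 : 0 ≤ t) (ht1 : t ≤ 1) :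
    (1 - t) ^ θ + (1 + t) ^ θ - 2 ≤ -(θ * (1 - θ) / 2) * t ^ 2 := by
  set c : ℝ := θ * (1 - θ) / 2 with hc
  set f : ℝ → ℝ := fun s => (1 - s) ^ θ + (1 + s) ^ θ + c * s ^ 2 with hf
  have hant : AntitoneOn f (Icc (0:ℝ) 1) := by
    apply antitoneOn_of_deriv_nonpos (convex_Icc 0 1)
    · apply ContinuousOn.add
      apply ContinuousOn.add
      · exact ((Real.continuous_rpow_const hθ0.le).comp
          (continuous_const.sub continuous_id)).continuousOn
      · exact ((Real.continuous_rpow_const hθ0.le).comp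
          (continuous_const.add continuous_id)).continuousOn
      · exact (continuous_const.mul (continuous_pow 2)).continuousOn
    · intro s hs
      rw [interior_Icc] at hs
      obtain ⟨hs0, hs1⟩ := hs
      have h1 : HasDerivAt (fun s : ℝ => (1 - s) ^ θ) (θ * (1 - s) ^ (θ - 1) * (-1)) s :=
        (Real.hasDerivAt_rpow_const (Or.inl (by linarith))).comp s
          ((hasDerivAt_id s).const_sub 1)
      have h2 : HasDerivAt (fun s : ℝ => (1 + s) ^ θ) (θ * (1 + s) ^ (θ - 1) * 1) s :=
        (Real.hasDerivAt_rpow_const (Or.inl (by linarith))).comp s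
          ((hasDerivAt_id s).const_add 1)
      have h3 : HasDerivAt (fun s : ℝ => c * s ^ 2) (c * (2 * s ^ 1)) s :=
        (hasDerivAt_pow 2 s).const_mul c
      exact ((h1.add h2).add h3).differentiableAt.differentiableWithinAt
    · intro s hs
      rw [interior_Icc] at hs
      obtain ⟨hs0, hs1⟩ := hs
      have h1 : HasDerivAt (fun s : ℝ => (1 - s) ^ θ) (θ * (1 - s) ^ (θ - 1) * (-1)) s :=
        (Real.hasDerivAt_rpow_const (Or.inl (by linarith))).comp s
          ((hasDerivAt_id s).const_sub 1)
      have h2 : HasDerivAt (fun s : ℝ => (1 + s) ^ θ) (θ * (1 + s) ^ (θ - 1) * 1) s :=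
        (Real.hasDerivAt_rpow_const (Or.inl (by linarith))).comp s
          ((hasDerivAt_id s).const_add 1)
      have h3 : HasDerivAt (fun s : ℝ => c * s ^ 2) (c * (2 * s ^ 1)) s :=
        (hasDerivAt_pow 2 s).const_mul c
      have hder : HasDerivAt f
          (θ * (1 - s) ^ (θ - 1) * (-1) + θ * (1 + s) ^ (θ - 1) * 1 + c * (2 * s ^ 1)) s :=
        (h1.add h2).add h3
      rw [hder.deriv]
      -- bound the pieces
      have hA : (1 + s) ^ (θ - 1) ≤ 1 :=
        Real.rpow_le_one_of_one_le_of_nonpos (by linarith) (by linarith)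
      have hb1 : (1 - s) ^ (1 - θ) ≤ 1 - (1 - θ) * s := by
        have := rpow_one_add_le_one_add_mul_self (s := -s) (by linarith)
          (p := 1 - θ) (by linarith) (by linarith)
        have h' : (1 + -s) = 1 - s := by ring
        rw [h'] at this
        linarith [this]
      have hpos : (0:ℝ) < 1 - (1 - θ) * s := by nlinarith
      have h1s : (0:ℝ) < 1 - s := by linarith
      have hpos2 : (0:ℝ) < (1 - s) ^ (1 - θ) := Real.rpow_pos_of_pos h1s _
      have hB : 1 + (1 - θ) * s ≤ (1 - s) ^ (θ - 1) := by
        rw [show θ - 1 = -(1 - θ) by ring, Real.rpow_neg h1s.le, ← one_div,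
          le_div_iff₀ hpos2]
        nlinarith [mul_le_mul_of_nonneg_left hb1 (by nlinarith : (0:ℝ) ≤ 1 + (1 - θ) * s),
          sq_nonneg ((1 - θ) * s)]
      have hθ0' : (0:ℝ) ≤ θ := hθ0.le
      rw [pow_one]
      nlinarith [mul_le_mul_of_nonneg_left hB hθ0.le,
        mul_le_mul_of_nonneg_left hA hθ0.le]
  have h0mem : (0:ℝ) ∈ Icc (0:ℝ) 1 := ⟨le_refl 0, by norm_num⟩
  have htmem : t ∈ Icc (0:ℝ) 1 := ⟨ht0, ht1⟩
  have := hant h0mem htmem ht0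
  have hf0 : f 0 = 2 := by
    simp [hf, Real.one_rpow]; norm_num
  have hft : f t = (1 - t) ^ θ + (1 + t) ^ θ + c * t ^ 2 := rfl
  rw [hf0, hft] at this
  linarith

theorem stmt10 (θ : ℝ) (hθ0 : 0 < θ) (hθ1 : θ < 1) :
    ∃ A : ℝ, 0 < A ∧ ∀ Xm X0 Xp : ℝ, 0 ≤ Xm → Xm ≤ X0 → X0 ≤ Xp → 0 < Xp →
      (Xp + Xm - X0) ^ θ + (Xp + X0 - Xm) ^ θ - 2 * Xp ^ θ
        ≤ -A * Xp ^ θ * ((X0 - Xm) / Xp) ^ (2 : ℕ) := by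
  refine ⟨θ * (1 - θ) / 2, by nlinarith, ?_⟩
  intro Xm X0 Xp h0m hm0 h0p hp
  set t : ℝ := (X0 - Xm) / Xp with ht
  have ht0 : 0 ≤ t := div_nonneg (by linarith) hp.le
  have ht1 : t ≤ 1 := (div_le_one hp).mpr (by linarith)
  have hpne : Xp ≠ 0 := hp.ne'
  have e1 : Xp + Xm - X0 = Xp * (1 - t) := by
    have hmt : Xp * t = X0 - Xm := by rw [ht]; field_simp
    linarith
  have e2 : Xp + X0 - Xm = Xp * (1 + t) := by
    have hmt : Xp * t = X0 - Xm := by rw [ht]; field_simp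
    linarith
  rw [e1, e2, Real.mul_rpow hp.le (by linarith : (0:ℝ) ≤ 1 - t),
    Real.mul_rpow hp.le (by linarith : (0:ℝ) ≤ 1 + t)]
  have key := stmt10_key θ hθ0 hθ1 ht0 ht1
  have hXp : (0:ℝ) ≤ Xp ^ θ := Real.rpow_nonneg hp.le θ
  have := mul_le_mul_of_nonneg_left key hXp
  nlinarith [this]
end
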